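/- Let G be a connected graph on n₀ vertices that contains a triangle-factor and has exactly (4/3)·n₀ − 1 edges. Then every cycle in G is one of the n₀/3 triangles of the triangle-factor; in particular G contains no cycle of length at least 4. -/

import Mathlib

open SimpleGraph Finset

def IsTriangleFactor {V : Type*} [DecidableEq V] (G : SimpleGraph V) (P : Finset (Finset V)) : Prop :=
  (∀ t ∈ P, G.IsNClique 3 t) ∧ (∀ v : V, ∃! t, t ∈ P ∧ v ∈ t)

section Aux

lemma reach_hom {V W : Type*} {G : SimpleGraph V} {H : SimpleGraph W} (f : V → W)
    (hadj : ∀ a b : V, G.Adj a b → H.Reachable (f a) (f b)) {x y : V} (h : G.Reachable x y) :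
    H.Reachable (f x) (f y) := by
  obtain ⟨w⟩ := h
  induction w with
  | nil => exact Reachable.refl _
  | cons h p ih => exact (hadj _ _ h).trans ih

lemma delete_edge_connected {V : Type*} {G : SimpleGraph V} {v w : V}
    (h : G.Connected) (hr : (G \ fromEdgeSet {s(v, w)}).Reachable v w) :
    (G \ fromEdgeSet {s(v, w)}).Connected := by
  haveI := h.nonempty
  refine Connected.mk fun x y => ?_
  refine reach_hom (G := G) id (fun a b hab => ?_) (h.preconnected x y)
  by_cases he : s(a, b) = s(v, w)
  · rw [Sym2.eq_iff] at he
    rcases he with ⟨rfl, rfl⟩ | ⟨rfl, rfl⟩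
    · exact hr
    · exact hr.symm
  · exact Adj.reachable (by simp [he, hab, hab.ne])

lemma delete_edge_edgeFinset {V : Type*} [Fintype V] [DecidableEq V] {G : SimpleGraph V} {v w : V}
    [Fintype G.edgeSet] [Fintype (G \ fromEdgeSet {s(v, w)}).edgeSet] :
    (G \ fromEdgeSet {s(v, w)}).edgeFinset = G.edgeFinset.erase s(v, w) := by
  ext e
  induction e with
  | _ x y =>
    simp only [mem_edgeFinset, mem_erase, mem_edgeSet, sdiff_adj, fromEdgeSet_adj,
      Set.mem_singleton_iff]
    constructor
    · rintro ⟨h1, h2⟩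
      exact ⟨fun hc => h2 ⟨hc, h1.ne⟩, h1⟩
    · rintro ⟨h1, h2⟩
      exact ⟨h2, fun hc => h1 hc.1⟩

lemma conn_card_le_aux {V : Type*} [Fintype V] [DecidableEq V] :
    ∀ (n : ℕ) (G : SimpleGraph V) (_ : Fintype G.edgeSet),
      G.edgeFinset.card ≤ n → G.Connected → Fintype.card V ≤ G.edgeFinset.card + 1 := by
  intro n
  induction n with
  | zero =>
    intro G inst hle hconn
    have hac : G.IsAcyclic := by
      intro v c hc
      have h3 := hc.three_le_length
      have hne : c.edges ≠ [] := by
        intro h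
        have := c.length_edges
        rw [h] at this
        simp at this
        omega
      obtain ⟨e, he⟩ := List.exists_mem_of_ne_nil _ hne
      have hmem : e ∈ G.edgeFinset := mem_edgeFinset.2 (c.edges_subset_edgeSet he)
      have := Finset.card_pos.2 ⟨e, hmem⟩
      omega
    exact (IsTree.card_edgeFinset ⟨hconn, hac⟩).ge
  | succ n ih =>
    intro G inst hle hconn
    by_cases hac : G.IsAcyclic
    · exact (IsTree.card_edgeFinset ⟨hconn, hac⟩).ge
    · rw [isAcyclic_iff_forall_adj_isBridge] at hac
      push_neg at hac
      obtain ⟨v, w, hadj, hnb⟩ := hac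
      rw [isBridge_iff] at hnb
      have hr : (G \ fromEdgeSet {s(v, w)}).Reachable v w := by
        by_contra hr
        exact hnb hr
      classical
      haveI : Fintype (G \ fromEdgeSet {s(v, w)}).edgeSet := Subtype.fintype _
      have hE' := delete_edge_edgeFinset (G := G) (v := v) (w := w)
      have hmem : s(v, w) ∈ G.edgeFinset := by simpa using hadj
      have hcard' : (G \ fromEdgeSet {s(v, w)}).edgeFinset.card = G.edgeFinset.card - 1 := by
        rw [hE', Finset.card_erase_of_mem hmem]
      have hpos := Finset.card_pos.2 ⟨_, hmem⟩
      have := ih (G \ fromEdgeSet {s(v, w)}) _ (by omega) (delete_edge_connected hconn hr)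
      omega

lemma conn_card_le {V : Type*} [Fintype V] [DecidableEq V] (G : SimpleGraph V)
    [Fintype G.edgeSet] (hconn : G.Connected) : Fintype.card V ≤ G.edgeFinset.card + 1 :=
  conn_card_le_aux G.edgeFinset.card G _ le_rfl hconn

lemma conn_acyclic {V : Type*} [Fintype V] [DecidableEq V] (G : SimpleGraph V)
    [Fintype G.edgeSet] (hconn : G.Connected)
    (hcard : G.edgeFinset.card + 1 ≤ Fintype.card V) : G.IsAcyclic := by
  by_contra hac
  rw [isAcyclic_iff_forall_adj_isBridge] at hac
  push_neg at hac
  obtain ⟨v, w, hadj, hnb⟩ := hac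
  rw [isBridge_iff] at hnb
  have hr : (G \ fromEdgeSet {s(v, w)}).Reachable v w := by
    by_contra hr
    exact hnb hr
  classical
  haveI : Fintype (G \ fromEdgeSet {s(v, w)}).edgeSet := Subtype.fintype _
  have hE' := delete_edge_edgeFinset (G := G) (v := v) (w := w)
  have hmem : s(v, w) ∈ G.edgeFinset := by simpa using hadj
  have hcard' : (G \ fromEdgeSet {s(v, w)}).edgeFinset.card = G.edgeFinset.card - 1 := by
    rw [hE', Finset.card_erase_of_mem hmem]
  have hpos := Finset.card_pos.2 ⟨_, hmem⟩
  have := conn_card_le _ (delete_edge_connected hconn hr)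
  omega

variable {V : Type*} [DecidableEq V] {G : SimpleGraph V} {P : Finset (Finset V)}

/-- The triangle of the factor containing `v`. -/
def tfPart (hP : IsTriangleFactor G P) (v : V) : Finset V :=
  P.choose (v ∈ ·) (hP.2 v)

lemma tfPart_mem (hP : IsTriangleFactor G P) (v : V) : tfPart hP v ∈ P :=
  Finset.choose_mem _ _ _

lemma mem_tfPart (hP : IsTriangleFactor G P) (v : V) : v ∈ tfPart hP v :=
  Finset.choose_property (fun t => v ∈ t) P (hP.2 v)

lemma tfPart_eq (hP : IsTriangleFactor G P) {v : V} {t : Finset V}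
    (ht : t ∈ P) (hv : v ∈ t) : tfPart hP v = t :=
  (hP.2 v).unique ⟨tfPart_mem hP v, mem_tfPart hP v⟩ ⟨ht, hv⟩

lemma tfPart_card (hP : IsTriangleFactor G P) (v : V) : (tfPart hP v).card = 3 :=
  (hP.1 _ (tfPart_mem hP v)).2

end Aux

theorem stmt1 {V : Type*} [Fintype V] [DecidableEq V] (G : SimpleGraph V) [DecidableRel G.Adj]
    (n₀ : ℕ) (hn : Fintype.card V = n₀) (hconn : G.Connected)
    (P : Finset (Finset V)) (hP : IsTriangleFactor G P)
    (hE : 3 * G.edgeFinset.card + 3 = 4 * n₀) :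
    ∀ (v : V) (c : G.Walk v v), c.IsCycle →
      c.support.toFinset ∈ P ∧ c.length = 3 := by
  classical
  subst hn
  intro v c hcyc
  set p : V → Finset V := tfPart hP with hp
  -- cardinality of V
  have hcard3 : ∀ t ∈ P, t.card = 3 := fun t ht => (hP.1 t ht).2
  have huniv : (Finset.univ : Finset V) = P.biUnion id := by
    ext x
    simp only [mem_biUnion, id, mem_univ, true_iff]
    exact ⟨_, tfPart_mem hP x, mem_tfPart hP x⟩
  have hdisj : ∀ t ∈ P, ∀ s ∈ P, t ≠ s → Disjoint (id t) (id s) := by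
    intro t ht s hs hne
    rw [Finset.disjoint_left]
    intro x hxt hxs
    exact hne ((tfPart_eq hP ht hxt).symm.trans (tfPart_eq hP hs hxs))
  have hn3 : Fintype.card V = 3 * P.card := by
    rw [← Finset.card_univ, huniv, Finset.card_biUnion hdisj]
    simp only [id_eq]
    rw [Finset.sum_congr rfl (fun t ht => hcard3 t ht), Finset.sum_const, smul_eq_mul, mul_comm]
  -- inside edges
  set inside : Sym2 V → Prop := fun e => ∃ t ∈ P, ∀ x ∈ e, x ∈ t with hinside
  have hpart_edges : ∀ t ∈ P, (G.edgeFinset.filter (fun e => ∀ x ∈ e, x ∈ t)).card = 3 := by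
    intro t ht
    obtain ⟨a, b, c', hab, hac, hbc, rfl⟩ := Finset.card_eq_three.1 (hcard3 t ht)
    have hclq := (hP.1 _ ht).1
    have hadj : ∀ x ∈ ({a, b, c'} : Finset V), ∀ y ∈ ({a, b, c'} : Finset V), x ≠ y →
        G.Adj x y := fun x hx y hy hxy => hclq (by simpa using hx) (by simpa using hy) hxy
    have heq : G.edgeFinset.filter (fun e => ∀ x ∈ e, x ∈ ({a, b, c'} : Finset V)) =
        {s(a, b), s(a, c'), s(b, c')} := by
      ext e
      induction e with
      | _ x y =>
        constructor
        · intro he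
          have hxy : G.Adj x y := by simpa using (mem_filter.1 he).1
          have hx : x ∈ ({a, b, c'} : Finset V) :=
            (mem_filter.1 he).2 x (Sym2.mem_mk_left x y)
          have hy : y ∈ ({a, b, c'} : Finset V) :=
            (mem_filter.1 he).2 y (Sym2.mem_mk_right x y)
          have hne : x ≠ y := hxy.ne
          simp only [mem_insert, mem_singleton] at hx hy ⊢
          simp only [Sym2.eq_iff]
          rcases hx with rfl | rfl | rfl <;> rcases hy with rfl | rfl | rfl <;>
            first
            | exact absurd rfl hne
            | simp
        · intro he
          simp only [mem_insert, mem_singleton] at he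
          have hmem : ∀ u w : V, u ∈ ({a, b, c'} : Finset V) → w ∈ ({a, b, c'} : Finset V) →
              u ≠ w → s(u, w) ∈
                G.edgeFinset.filter (fun e => ∀ x ∈ e, x ∈ ({a, b, c'} : Finset V)) := by
            intro u w hu hw huw
            refine mem_filter.2 ⟨mem_edgeFinset.2 (hadj u hu w hw huw), ?_⟩
            intro z hz
            rcases Sym2.mem_iff.1 hz with rfl | rfl <;> assumption
          rcases he with h | h | h <;> rw [h]
          · exact hmem a b (by simp) (by simp) hab
          · exact hmem a c' (by simp) (by simp) hac
          · exact hmem b c' (by simp) (by simp) hbc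
    rw [heq]
    rw [Finset.card_insert_of_notMem
        (by simp [Sym2.eq_iff, hab, hac, hbc, hab.symm, hac.symm, hbc.symm]),
      Finset.card_insert_of_notMem
        (by simp [Sym2.eq_iff, hab, hac, hbc, hab.symm, hac.symm, hbc.symm]),
      Finset.card_singleton]
  have hIcount : (G.edgeFinset.filter inside).card = 3 * P.card := by
    have hsplit : G.edgeFinset.filter inside =
        P.biUnion (fun t => G.edgeFinset.filter (fun e => ∀ x ∈ e, x ∈ t)) := by
      ext e
      simp only [mem_filter, mem_biUnion, hinside]
      tauto
    rw [hsplit, Finset.card_biUnion, Finset.sum_congr rfl hpart_edges, Finset.sum_const,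
      smul_eq_mul, mul_comm]
    · intro t ht s hs hne
      rw [Function.onFun_apply, Finset.disjoint_left]
      intro e het hes
      induction e with
      | _ x y =>
        have hxt : x ∈ t := (mem_filter.1 het).2 x (by simp)
        have hxs : x ∈ s := (mem_filter.1 hes).2 x (by simp)
        exact hne ((tfPart_eq hP ht hxt).symm.trans (tfPart_eq hP hs hxs))
  set cross : Finset (Sym2 V) := G.edgeFinset.filter (fun e => ¬ inside e) with hcross
  have hEsplit : (G.edgeFinset.filter inside).card + cross.card = G.edgeFinset.card :=
    Finset.card_filter_add_card_filter_not _
  have hPpos : 0 < P.card := by omega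
  have hcrosscard : cross.card = P.card - 1 := by omega
  -- the quotient graph
  let Q : SimpleGraph {t : Finset V // t ∈ P} :=
    { Adj := fun s t => s ≠ t ∧ ∃ a ∈ s.1, ∃ b ∈ t.1, G.Adj a b
      symm := ⟨by
        rintro s t ⟨hne, a, ha, b, hb, hab⟩
        exact ⟨hne.symm, b, hb, a, ha, hab.symm⟩⟩
      loopless := ⟨fun s h => h.1 rfl⟩ }
  haveI : Fintype Q.edgeSet := Subtype.fintype _
  let φ : V → {t : Finset V // t ∈ P} := fun x => ⟨p x, tfPart_mem hP x⟩
  have hφeq : ∀ (x : V) (t : Finset V) (ht : t ∈ P), x ∈ t → φ x = ⟨t, ht⟩ :=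
    fun x t ht hx => Subtype.ext (tfPart_eq hP ht hx)
  have hstep : ∀ x y : V, G.Adj x y → Q.Reachable (φ x) (φ y) := by
    intro x y hxy
    by_cases h : φ x = φ y
    · rw [h]
    · exact Adj.reachable ⟨h, x, mem_tfPart hP x, y, mem_tfPart hP y, hxy⟩
  have hQconn : Q.Connected := by
    have : Nonempty {t : Finset V // t ∈ P} := by
      obtain ⟨t, ht⟩ := Finset.card_pos.1 hPpos
      exact ⟨⟨t, ht⟩⟩
    refine Connected.mk fun s t => ?_
    obtain ⟨a, ha⟩ := Finset.card_pos.1 (by rw [hcard3 s.1 s.2]; norm_num)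
    obtain ⟨b, hb⟩ := Finset.card_pos.1 (by rw [hcard3 t.1 t.2]; norm_num)
    have := reach_hom φ hstep (hconn.preconnected a b)
    rwa [hφeq a s.1 s.2 ha, hφeq b t.1 t.2 hb] at this
  have hQvcard : Fintype.card {t : Finset V // t ∈ P} = P.card := Fintype.card_coe P
  let ψ : Sym2 V → Sym2 {t : Finset V // t ∈ P} := Sym2.map φ
  have hcross_ne : ∀ x y : V, s(x, y) ∈ cross → p x ≠ p y := by
    intro x y hxy h
    refine (mem_filter.1 hxy).2 ⟨p x, tfPart_mem hP x, fun z hz => ?_⟩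
    rcases Sym2.mem_iff.1 hz with rfl | rfl
    · exact mem_tfPart hP z
    · rw [h]; exact mem_tfPart hP z
  have himg : cross.image ψ = Q.edgeFinset := by
    apply Finset.Subset.antisymm
    · intro e' he'
      obtain ⟨e, he, rfl⟩ := Finset.mem_image.1 he'
      revert he
      induction e with
      | _ x y =>
        intro he
        have hadj : G.Adj x y := by simpa using (mem_filter.1 he).1
        have hpne : p x ≠ p y := hcross_ne x y he
        rw [mem_edgeFinset]
        exact ⟨fun h => hpne (congrArg Subtype.val h), x, mem_tfPart hP x, y, mem_tfPart hP y,
          hadj⟩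
    · intro e' he'
      revert he'
      induction e' with
      | _ st tt =>
        intro he'
        obtain ⟨hne, a, ha, b, hb, hab⟩ := mem_edgeFinset.1 he'
        have hmem : s(a, b) ∈ cross := by
          refine mem_filter.2 ⟨mem_edgeFinset.2 hab, ?_⟩
          rintro ⟨u, hu, hall⟩
          refine hne (Subtype.ext ?_)
          rw [← tfPart_eq hP st.2 ha, ← tfPart_eq hP tt.2 hb,
            tfPart_eq hP hu (hall a (by simp)), tfPart_eq hP hu (hall b (by simp))]
        refine Finset.mem_image.2 ⟨s(a, b), hmem, ?_⟩
        show s(φ a, φ b) = s(st, tt)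
        rw [hφeq a st.1 st.2 ha, hφeq b tt.1 tt.2 hb]
  have hQEcard : Q.edgeFinset.card = P.card - 1 := by
    have hle : Q.edgeFinset.card ≤ P.card - 1 := by
      rw [← himg, ← hcrosscard]
      exact Finset.card_image_le
    have hge := conn_card_le Q hQconn
    rw [hQvcard] at hge
    omega
  have hinj : Set.InjOn ψ cross := by
    rw [← Finset.card_image_iff, himg, hQEcard, hcrosscard]
  have hQac : Q.IsAcyclic := by
    refine conn_acyclic Q hQconn ?_
    rw [hQvcard, hQEcard]
    omega
  -- every edge of the cycle is inside a triangle
  have hbridge : ∀ a b : V, s(a, b) ∈ cross → s(a, b) ∉ c.edges := by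
    intro a b hab hmem
    have hadj : G.Adj a b := by simpa using (mem_filter.1 hab).1
    have hpne : p a ≠ p b := hcross_ne a b hab
    have hQadj : Q.Adj (φ a) (φ b) :=
      ⟨fun h => hpne (congrArg Subtype.val h), a, mem_tfPart hP a, b, mem_tfPart hP b, hadj⟩
    have hQbr := isAcyclic_iff_forall_adj_isBridge.1 hQac hQadj
    rw [isBridge_iff] at hQbr
    have hGr : (G \ fromEdgeSet {s(a, b)}).Reachable a b :=
      (adj_and_reachable_delete_edges_iff_exists_cycle.2 ⟨v, c, hcyc, hmem⟩).2
    refine hQbr (reach_hom φ (fun x y hxy => ?_) hGr)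
    rw [sdiff_adj, fromEdgeSet_adj] at hxy
    obtain ⟨hxy', hne⟩ := hxy
    have hsxy : s(x, y) ≠ s(a, b) := fun h => hne ⟨by simp [h], hxy'.ne⟩
    by_cases hpp : p x = p y
    · rw [show φ x = φ y from Subtype.ext hpp]
    · have hxcross : s(x, y) ∈ cross := by
        refine mem_filter.2 ⟨mem_edgeFinset.2 hxy', ?_⟩
        rintro ⟨u, hu, hall⟩
        exact hpp ((tfPart_eq hP hu (hall x (by simp))).trans
          (tfPart_eq hP hu (hall y (by simp))).symm)
      have hψne : s(φ x, φ y) ≠ s(φ a, φ b) := fun h => hsxy (hinj hxcross hab h)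
      refine Adj.reachable ?_
      show (Q \ fromEdgeSet {s(φ a, φ b)}).Adj (φ x) (φ y)
      rw [sdiff_adj, fromEdgeSet_adj]
      refine ⟨⟨fun h => hpp (congrArg Subtype.val h), x, mem_tfPart hP x, y,
        mem_tfPart hP y, hxy'⟩, ?_⟩
      rintro ⟨h1, -⟩
      exact hψne (by simpa using h1)
  have hins : ∀ e ∈ c.edges, inside e := by
    intro e he
    by_contra hni
    have hec : e ∈ cross := mem_filter.2 ⟨mem_edgeFinset.2 (c.edges_subset_edgeSet he), hni⟩
    revert he hec
    induction e with
    | _ a b => exact fun he hec => hbridge a b hec he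
  -- all support vertices lie in the triangle of `v`
  have key : ∀ (x y : V) (w : G.Walk x y), (∀ e ∈ w.edges, inside e) →
      ∀ u ∈ w.support, p u = p x := by
    intro x y w
    induction w with
    | nil =>
      intro _ u hu
      simp only [Walk.support_nil, List.mem_singleton] at hu
      rw [hu]
    | @cons x x' y h w ih =>
      intro hinsw u hu
      have hxx' : p x = p x' := by
        obtain ⟨t, ht, hall⟩ := hinsw s(x, x') (by simp [Walk.edges_cons])
        exact (tfPart_eq hP ht (hall x (by simp))).trans
          (tfPart_eq hP ht (hall x' (by simp))).symm
      rw [Walk.support_cons] at hu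
      rcases List.mem_cons.1 hu with rfl | hu
      · rfl
      · rw [ih (fun e he => hinsw e (by simp [Walk.edges_cons, he])) u hu, hxx']
  have hsupp : ∀ u ∈ c.support, p u = p v := key v v c hins
  have hsub : c.support.toFinset ⊆ p v := by
    intro u hu
    rw [List.mem_toFinset] at hu
    rw [← hsupp u hu]
    exact mem_tfPart hP u
  -- the end vertex is in the tail of the support
  obtain ⟨u', hadj', q, rfl⟩ := Walk.not_nil_iff.1 hcyc.not_nil
  have hvtail : v ∈ (Walk.cons hadj' q).support.tail := by
    rw [Walk.support_cons]
    simpa using q.end_mem_support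
  have htf : (Walk.cons hadj' q).support.toFinset = (Walk.cons hadj' q).support.tail.toFinset := by
    conv_lhs => rw [Walk.support_eq_cons]
    rw [List.toFinset_cons, Finset.insert_eq_self]
    exact List.mem_toFinset.2 hvtail
  have hnodup := hcyc.support_nodup
  have hcardsupp : (Walk.cons hadj' q).support.toFinset.card = (Walk.cons hadj' q).length := by
    rw [htf, List.toFinset_card_of_nodup hnodup, List.length_tail, Walk.length_support]
    omega
  have h3le := hcyc.three_le_length
  have hple : (Walk.cons hadj' q).support.toFinset.card ≤ 3 :=
    le_trans (Finset.card_le_card hsub) (by rw [tfPart_card hP v])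
  have hlen : (Walk.cons hadj' q).length = 3 := by omega
  have heqP : (Walk.cons hadj' q).support.toFinset = p v :=
    Finset.eq_of_subset_of_card_le hsub (by rw [hcardsupp, hlen, tfPart_card hP v])
  exact ⟨heqP ▸ tfPart_mem hP v, hlen⟩
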